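/- Let U, V ⊆ ℂ be open sets. Let Ψ₁, Ψ₂ : ℂ → ℂ be differentiable on U with Ψ₁(x)·Ψ₂'(x) − Ψ₂(x)·Ψ₁'(x) = 1 and Ψ₁(x) ≠ 0 for all x ∈ U, and let ψ₁, ψ₂ : ℂ → ℂ be differentiable on V with ψ₁(w)·ψ₂'(w) − ψ₂(w)·ψ₁'(w) = 1 and ψ₁(w) ≠ 0 for all w ∈ V. Let z : ℂ → ℂ be differentiable on U with z(U) ⊆ V and suppose Ψ₂(x)·ψ₁(z(x)) = Ψ₁(x)·ψ₂(z(x)) for all x ∈ U. Then z'(x)·Ψ₁(x)² = ψ₁(z(x))² for all x ∈ U. -/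

import Mathlib

open Complex

theorem point_transformation_wronskian_relation
    (U V : Set ℂ) (hU : IsOpen U) (hV : IsOpen V)
    (Ψ₁ Ψ₂ ψ₁ ψ₂ z : ℂ → ℂ)
    (hΨ₁ : ∀ x ∈ U, DifferentiableAt ℂ Ψ₁ x)
    (hΨ₂ : ∀ x ∈ U, DifferentiableAt ℂ Ψ₂ x)
    (hW : ∀ x ∈ U, Ψ₁ x * deriv Ψ₂ x - Ψ₂ x * deriv Ψ₁ x = 1)
    (hΨ₁ne : ∀ x ∈ U, Ψ₁ x ≠ 0)
    (hψ₁ : ∀ w ∈ V, DifferentiableAt ℂ ψ₁ w)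
    (hψ₂ : ∀ w ∈ V, DifferentiableAt ℂ ψ₂ w)
    (hw : ∀ w ∈ V, ψ₁ w * deriv ψ₂ w - ψ₂ w * deriv ψ₁ w = 1)
    (hψ₁ne : ∀ w ∈ V, ψ₁ w ≠ 0)
    (hz : ∀ x ∈ U, DifferentiableAt ℂ z x)
    (hzV : Set.MapsTo z U V)
    (hratio : ∀ x ∈ U, Ψ₂ x * ψ₁ (z x) = Ψ₁ x * ψ₂ (z x)) :
    ∀ x ∈ U, deriv z x * (Ψ₁ x) ^ 2 = (ψ₁ (z x)) ^ 2 := by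
  intro x hx
  have hzx : z x ∈ V := hzV hx
  have hdz := hz x hx
  have hψ₁c : DifferentiableAt ℂ (fun y => ψ₁ (z y)) x :=
    (hψ₁ _ hzx).comp x hdz
  have hψ₂c : DifferentiableAt ℂ (fun y => ψ₂ (z y)) x :=
    (hψ₂ _ hzx).comp x hdz
  have hdψ₁ : deriv (fun y => ψ₁ (z y)) x = deriv ψ₁ (z x) * deriv z x :=
    deriv_comp x (hψ₁ _ hzx) hdz
  have hdψ₂ : deriv (fun y => ψ₂ (z y)) x = deriv ψ₂ (z x) * deriv z x :=
    deriv_comp x (hψ₂ _ hzx) hdz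
  have heq : (fun y => Ψ₂ y * ψ₁ (z y)) =ᶠ[nhds x] (fun y => Ψ₁ y * ψ₂ (z y)) :=
    Filter.eventuallyEq_of_mem (hU.mem_nhds hx) (fun y hy => hratio y hy)
  have hD := heq.deriv_eq
  rw [deriv_fun_mul (hΨ₂ x hx) hψ₁c, deriv_fun_mul (hΨ₁ x hx) hψ₂c, hdψ₁, hdψ₂] at hD
  have h1 := hW x hx
  have h2 := hw (z x) hzx
  have h4 := hratio x hx
  linear_combination (ψ₁ (z x))^2 * h1 - (deriv z x * (Ψ₁ x)^2) * h2
    - Ψ₁ x * ψ₁ (z x) * hD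
    + (deriv Ψ₁ x * ψ₁ (z x) + deriv z x * deriv ψ₁ (z x) * Ψ₁ x) * h4
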